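/- arXiv:2303.06789 — 3 statements merged into one kernel-verified Lean document; each statement's English description precedes it below -/
import Mathlib

section
/- Let G = (V, E) be a finite simple graph and let G' be a graph obtained from G by subdividing each edge in some set F ⊆ E an arbitrary finite number of times (i.e., replacing each edge of F by a path of positive length through new vertices of degree 2). Then the pathwidth of G' satisfies pw(G') ≤ pw(G) + 2. -/
/-- A tree decomposition of a simple graph `G` on vertex type `V`, with bags indexed by the
nodes of a finite tree `T` on `Fin n`: every vertex is in some bag, every edge has both
endpoints in some bag, and for each vertex the set of nodes whose bag contains it induces a
connected (hence subtree) subgraph of `T`. -/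
def IsTreeDecomp {V : Type} (G : SimpleGraph V) {n : ℕ}
    (T : SimpleGraph (Fin n)) (bag : Fin n → Finset V) : Prop :=
  T.IsTree ∧
  (∀ v : V, ∃ i, v ∈ bag i) ∧
  (∀ u v : V, G.Adj u v → ∃ i, u ∈ bag i ∧ v ∈ bag i) ∧
  (∀ v : V, (T.induce {i | v ∈ bag i}).Connected)

/-- The treewidth of `G`: the least `w` such that `G` admits a tree decomposition all of whose
bags have at most `w + 1` vertices (i.e. of width at most `w`). -/
noncomputable def treewidth {V : Type} (G : SimpleGraph V) : ℕ :=
  sInf {w : ℕ | ∃ (n : ℕ) (T : SimpleGraph (Fin n)) (bag : Fin n → Finset V),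
    IsTreeDecomp G T bag ∧ ∀ i, (bag i).card ≤ w + 1}

/-- The pathwidth of `G`: the least `w` such that `G` admits a tree decomposition along a path
all of whose bags have at most `w + 1` vertices (i.e. a path decomposition of width at most
`w`). -/
noncomputable def pathwidth {V : Type} (G : SimpleGraph V) : ℕ :=
  sInf {w : ℕ | ∃ (n : ℕ) (bag : Fin n → Finset V),
    IsTreeDecomp G (SimpleGraph.pathGraph n) bag ∧ ∀ i, (bag i).card ≤ w + 1}

/-- The graph obtained from `G` by subdividing the edge `{u, v}` once: the edge `{u, v}` is
deleted and a new vertex `none` is joined to `u` and `v`; everything else is unchanged. -/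
def subdivideEdge {V : Type} (G : SimpleGraph V) (u v : V) : SimpleGraph (Option V) :=
  SimpleGraph.fromRel (fun a b =>
    (∃ x y : V, a = some x ∧ b = some y ∧ G.Adj x y ∧ s(x, y) ≠ s(u, v)) ∨
    (a = none ∧ (b = some u ∨ b = some v)))

/-- `IsSubdivisionOf G G'` means that `G'` is obtained from `G` by a finite sequence of single
edge subdivisions; equivalently, by replacing each edge of some set `F` of edges of `G` by a
path of positive length through new degree-2 vertices. -/
inductive IsSubdivisionOf : {V : Type} → SimpleGraph V → {W : Type} → SimpleGraph W → Prop
  | refl {V : Type} (G : SimpleGraph V) : IsSubdivisionOf G G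
  | step {V : Type} (G : SimpleGraph V) (u v : V) (huv : G.Adj u v)
      {W : Type} {G' : SimpleGraph W}
      (h : IsSubdivisionOf (subdivideEdge G u v) G') : IsSubdivisionOf G G'

open SimpleGraph


lemma pathGraph_walk_edge {n : ℕ} (e f : Fin n) (hef : (f : ℕ) = (e : ℕ) + 1) :
    ∀ {a b : Fin n} (p : (SimpleGraph.pathGraph n).Walk a b), a.val ≤ e.val → e.val < b.val →
      s(e, f) ∈ p.edges := by
  intro a b p
  induction p with
  | nil => intro h1 h2; omega
  | @cons x c y hadj q ih =>
    intro h1 h2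
    rw [Walk.edges_cons]
    rw [pathGraph_adj] at hadj
    by_cases hx : x.val = e.val ∧ c.val = f.val
    · have hxe : x = e := Fin.ext hx.1
      have hcf : c = f := Fin.ext hx.2
      have : s(x, c) = s(e, f) := by rw [hxe, hcf]
      rw [this]
      exact List.mem_cons_self
    · right
      rcases hadj with h | h
      · exact ih (by omega) h2
      · exact ih (by omega) h2

lemma pathGraph_isTree {n : ℕ} (hn : 0 < n) : (SimpleGraph.pathGraph n).IsTree := by
  obtain ⟨m, rfl⟩ : ∃ m, n = m + 1 := ⟨n - 1, by omega⟩
  refine ⟨SimpleGraph.pathGraph_connected m, ?_⟩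
  rw [SimpleGraph.isAcyclic_iff_forall_adj_isBridge]
  intro a b hab
  rw [SimpleGraph.isBridge_iff_adj_and_forall_walk_mem_edges]
  intro p
  rcases pathGraph_adj.mp hab with h | h
  · exact pathGraph_walk_edge a b (by omega) p (by omega) (by omega)
  · rw [Sym2.eq_swap]
    have := pathGraph_walk_edge b a (by omega) p.reverse (by omega) (by omega)
    rwa [Walk.edges_reverse, List.mem_reverse] at this


lemma interval_induce_reach {n : ℕ} (S : Set (Fin n))
    (hint : ∀ i j k : Fin n, i ∈ S → k ∈ S → i ≤ j → j ≤ k → j ∈ S) :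
    ∀ (d : ℕ) (a b : Fin n) (ha : a ∈ S) (hb : b ∈ S), (b : ℕ) = a + d →
      ((SimpleGraph.pathGraph n).induce S).Reachable ⟨a, ha⟩ ⟨b, hb⟩ := by
  intro d
  induction d with
  | zero =>
    intro a b ha hb hd
    have : a = b := Fin.ext (by omega)
    subst this
    rfl
  | succ d ih =>
    intro a b ha hb hd
    have hlt : (a : ℕ) + 1 < n := by omega
    set c : Fin n := ⟨(a : ℕ) + 1, hlt⟩ with hc
    have hcS : c ∈ S := hint a c b ha hb (by simp [hc, Fin.le_def]) (by simp [hc, Fin.le_def]; omega)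
    have hadj : ((SimpleGraph.pathGraph n).induce S).Adj ⟨a, ha⟩ ⟨c, hcS⟩ := by
      simp only [comap_adj, Function.Embedding.coe_subtype]
      rw [pathGraph_adj]
      left; simp [hc]
    exact (hadj.reachable).trans (ih c b hcS hb (by simp [hc]; omega))

lemma interval_induce_connected {n : ℕ} (S : Set (Fin n)) (hne : S.Nonempty)
    (hint : ∀ i j k : Fin n, i ∈ S → k ∈ S → i ≤ j → j ≤ k → j ∈ S) :
    ((SimpleGraph.pathGraph n).induce S).Connected := by
  rw [connected_iff]
  refine ⟨?_, ⟨⟨hne.choose, hne.choose_spec⟩⟩⟩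
  rintro ⟨a, ha⟩ ⟨b, hb⟩
  rcases le_total (a : ℕ) (b : ℕ) with h | h
  · exact interval_induce_reach S hint ((b : ℕ) - a) a b ha hb (by omega)
  · exact (interval_induce_reach S hint ((a : ℕ) - b) b a hb ha (by omega)).symm

lemma walk_pass {n : ℕ} {S : Set (Fin n)} :
    ∀ {x y : {i // i ∈ S}} (_ : ((SimpleGraph.pathGraph n).induce S).Walk x y) (j : Fin n),
      ((x : Fin n) ≤ j ∧ j ≤ (y : Fin n)) ∨ ((y : Fin n) ≤ j ∧ j ≤ (x : Fin n)) → j ∈ S := by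
  intro x y p
  induction p with
  | @nil z =>
    intro j hj
    rcases hj with ⟨h1, h2⟩ | ⟨h1, h2⟩ <;>
    · rw [Fin.le_def] at h1 h2
      have hx : j = _ := Fin.ext (Nat.le_antisymm h2 h1)
      exact hx ▸ z.2
  | @cons x c y hadj q ih =>
    intro j hj
    simp only [comap_adj, Function.Embedding.coe_subtype, pathGraph_adj] at hadj
    rw [Fin.le_def, Fin.le_def] at hj
    rw [Fin.le_def, Fin.le_def] at hj
    by_cases hjx : (j : ℕ) = ((x : Fin n) : ℕ)
    · have : j = (x : Fin n) := Fin.ext hjx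
      exact this ▸ x.2
    · apply ih j
      rw [Fin.le_def, Fin.le_def, Fin.le_def, Fin.le_def]
      omega

lemma subdivideEdge_adj {V : Type} (G : SimpleGraph V) (u v : V) (a b : Option V) :
    (subdivideEdge G u v).Adj a b ↔
      (∃ x y : V, a = some x ∧ b = some y ∧ G.Adj x y ∧ s(x, y) ≠ s(u, v)) ∨
      (a = none ∧ (b = some u ∨ b = some v)) ∨
      (b = none ∧ (a = some u ∨ a = some v)) := by
  rw [subdivideEdge, SimpleGraph.fromRel_adj]
  constructor
  · rintro ⟨hne, (⟨x, y, rfl, rfl, hxy, hs⟩ | ⟨rfl, h⟩) | (⟨x, y, rfl, rfl, hxy, hs⟩ | ⟨rfl, h⟩)⟩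
    · exact Or.inl ⟨x, y, rfl, rfl, hxy, hs⟩
    · exact Or.inr (Or.inl ⟨rfl, h⟩)
    · exact Or.inl ⟨y, x, rfl, rfl, hxy.symm, by rwa [Sym2.eq_swap]⟩
    · exact Or.inr (Or.inr ⟨rfl, h⟩)
  · rintro (⟨x, y, rfl, rfl, hxy, hs⟩ | ⟨rfl, h⟩ | ⟨rfl, h⟩)
    · exact ⟨by simp [hxy.ne], Or.inl (Or.inl ⟨x, y, rfl, rfl, hxy, hs⟩)⟩
    · exact ⟨by rcases h with rfl | rfl <;> simp, Or.inl (Or.inr ⟨rfl, h⟩)⟩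
    · exact ⟨by rcases h with rfl | rfl <;> simp, Or.inr (Or.inr ⟨rfl, h⟩)⟩

def SmallW {A : Type} (bag : ℕ → Finset A) (w : ℕ) (a b : A) : Prop :=
  ∃ i, a ∈ bag i ∧ b ∈ bag i ∧ (bag i).card ≤ w + 1

def SpecW {A : Type} (bag : ℕ → Finset A) (owner : ℕ → Option (A × A)) (w : ℕ)
    (a b : A) (i : ℕ) : Prop :=
  owner i = some (a, b) ∧ ∃ C : Finset A, (∀ x, x ∈ bag i ↔ x ∈ C ∨ x = a ∨ x = b) ∧
    C.card ≤ w + 1 ∧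
    (a ∈ C ∨ ∀ j, i < j → a ∉ bag j) ∧ (b ∈ C ∨ ∀ j, j < i → b ∉ bag j)

def NatPD {A : Type} (H : SimpleGraph A) (w : ℕ) : Prop :=
  ∃ (n : ℕ) (bag : ℕ → Finset A) (owner : ℕ → Option (A × A)),
    0 < n ∧ (∀ i, n ≤ i → bag i = ∅) ∧
    (∀ x, ∃ i, x ∈ bag i) ∧
    (∀ x : A, ∀ i j k : ℕ, i ≤ j → j ≤ k → x ∈ bag i → x ∈ bag k → x ∈ bag j) ∧
    (∀ i, (bag i).card ≤ w + 3) ∧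
    (∀ a b, H.Adj a b → SmallW bag w a b ∨
      ∃ i, SpecW bag owner w a b i ∨ SpecW bag owner w b a i)

lemma natPD_subdivide_spec {V : Type} (G : SimpleGraph V) (u v : V) (huv : G.Adj u v) (w : ℕ)
    (n : ℕ) (bag : ℕ → Finset V) (owner : ℕ → Option (V × V))
    (hn : 0 < n) (hempty : ∀ i, n ≤ i → bag i = ∅)
    (hcover : ∀ x, ∃ i, x ∈ bag i)
    (hconv : ∀ x : V, ∀ i j k : ℕ, i ≤ j → j ≤ k → x ∈ bag i → x ∈ bag k → x ∈ bag j)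
    (hcard : ∀ i, (bag i).card ≤ w + 3)
    (hedge : ∀ a b, G.Adj a b → SmallW bag w a b ∨
      ∃ i, SpecW bag owner w a b i ∨ SpecW bag owner w b a i)
    (hnsmall : ¬ SmallW bag w u v)
    (i0 : ℕ) (hspec : SpecW bag owner w u v i0) :
    NatPD (subdivideEdge G u v) w := by
  classical
  obtain ⟨hown, C, hbag, hC, hGu, hGv⟩ := hspec
  have huv' : u ≠ v := huv.ne
  have hu : u ∈ bag i0 := (hbag u).2 (Or.inr (Or.inl rfl))
  have hv : v ∈ bag i0 := (hbag v).2 (Or.inr (Or.inr rfl))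
  have hCsub : ∀ x, x ∈ C → x ∈ bag i0 := fun x hx => (hbag x).2 (Or.inl hx)
  have hi0n : i0 < n := by
    by_contra h
    have := hempty i0 (by omega)
    rw [this] at hu; simp at hu
  have hbig : ¬ (bag i0).card ≤ w + 1 := fun h => hnsmall ⟨i0, hu, hv, h⟩
  -- the new bags
  set bag' : ℕ → Finset (Option V) := fun j =>
    if j < i0 then (bag j).image some
    else if j = i0 then insert none ((insert u C).image some)
    else if j = i0 + 1 then insert none ((insert v C).image some)
    else (bag (j - 1)).image some with hbag'def
  set owner' : ℕ → Option (Option V × Option V) := fun j =>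
    if j < i0 then (owner j).map (fun p => (some p.1, some p.2))
    else if j = i0 then some (some u, none)
    else if j = i0 + 1 then some (none, some v)
    else (owner (j - 1)).map (fun p => (some p.1, some p.2)) with howner'def
  have hchar : ∀ (x : V) (j : ℕ), (some x ∈ bag' j ↔
      ((j < i0 ∧ x ∈ bag j) ∨ (j = i0 ∧ (x ∈ C ∨ x = u)) ∨
       (j = i0 + 1 ∧ (x ∈ C ∨ x = v)) ∨ (i0 + 2 ≤ j ∧ x ∈ bag (j - 1)))) := by
    intro x j
    simp only [hbag'def]
    split_ifs with h1 h2 h3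
    · simp only [Finset.mem_image, Option.some.injEq]
      constructor
      · rintro ⟨y, hy, rfl⟩
        exact Or.inl ⟨h1, hy⟩
      · rintro (⟨_, hx⟩ | ⟨h, _⟩ | ⟨h, _⟩ | ⟨h, _⟩)
        exacts [⟨x, hx, rfl⟩, absurd h (by omega), absurd h (by omega), absurd h (by omega)]
    · subst h2
      constructor
      · intro hmem
        rcases Finset.mem_insert.mp hmem with h | h
        · exact (Option.some_ne_none x h).elim
        · obtain ⟨y, hy, heq⟩ := Finset.mem_image.mp h
          rw [Option.some.injEq] at heq
          subst heq
          rcases Finset.mem_insert.mp hy with rfl | hyC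
          · exact Or.inr (Or.inl ⟨rfl, Or.inr rfl⟩)
          · exact Or.inr (Or.inl ⟨rfl, Or.inl hyC⟩)
      · rintro (⟨h, _⟩ | ⟨_, hx⟩ | ⟨h, _⟩ | ⟨h, _⟩)
        · omega
        · refine Finset.mem_insert.mpr (Or.inr (Finset.mem_image.mpr ⟨x, ?_, rfl⟩))
          rcases hx with h | h
          · exact Finset.mem_insert.mpr (Or.inr h)
          · exact Finset.mem_insert.mpr (Or.inl h)
        · omega
        · omega
    · subst h3
      constructor
      · intro hmem
        rcases Finset.mem_insert.mp hmem with h | h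
        · exact (Option.some_ne_none x h).elim
        · obtain ⟨y, hy, heq⟩ := Finset.mem_image.mp h
          rw [Option.some.injEq] at heq
          subst heq
          rcases Finset.mem_insert.mp hy with rfl | hyC
          · exact Or.inr (Or.inr (Or.inl ⟨rfl, Or.inr rfl⟩))
          · exact Or.inr (Or.inr (Or.inl ⟨rfl, Or.inl hyC⟩))
      · rintro (⟨h, _⟩ | ⟨h, _⟩ | ⟨_, hx⟩ | ⟨h, _⟩)
        · omega
        · omega
        · refine Finset.mem_insert.mpr (Or.inr (Finset.mem_image.mpr ⟨x, ?_, rfl⟩))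
          rcases hx with h | h
          · exact Finset.mem_insert.mpr (Or.inr h)
          · exact Finset.mem_insert.mpr (Or.inl h)
        · omega
    · simp only [Finset.mem_image, Option.some.injEq]
      constructor
      · rintro ⟨y, hy, rfl⟩
        exact Or.inr (Or.inr (Or.inr ⟨by omega, hy⟩))
      · rintro (⟨h, _⟩ | ⟨h, _⟩ | ⟨h, _⟩ | ⟨_, hx⟩)
        exacts [absurd h (by omega), absurd h h2, absurd h h3, ⟨x, hx, rfl⟩]
  have hnone : ∀ j : ℕ, (none ∈ bag' j ↔ j = i0 ∨ j = i0 + 1) := by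
    intro j
    simp only [hbag'def]
    split_ifs with h1 h2 h3 <;> simp <;> omega
  refine ⟨n + 1, bag', owner', by omega, ?_, ?_, ?_, ?_, ?_⟩
  · -- empty beyond n+1
    intro i hi
    refine Finset.eq_empty_of_forall_notMem ?_
    rintro (_ | x) ht
    · rw [hnone] at ht; omega
    · rw [hchar] at ht
      rcases ht with ⟨h, _⟩ | ⟨h, _⟩ | ⟨h, _⟩ | ⟨_, hm⟩
      · omega
      · omega
      · omega
      · rw [hempty (i - 1) (by omega)] at hm; simp at hm
  · -- cover
    rintro (_ | x)
    · exact ⟨i0, (hnone i0).2 (Or.inl rfl)⟩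
    · obtain ⟨i, hi⟩ := hcover x
      rcases lt_trichotomy i i0 with h | h | h
      · exact ⟨i, (hchar x i).2 (Or.inl ⟨h, hi⟩)⟩
      · subst h
        rcases (hbag x).1 hi with hxC | rfl | rfl
        · exact ⟨i, (hchar x i).2 (Or.inr (Or.inl ⟨rfl, Or.inl hxC⟩))⟩
        · exact ⟨i, (hchar x i).2 (Or.inr (Or.inl ⟨rfl, Or.inr rfl⟩))⟩
        · exact ⟨i + 1, (hchar x (i + 1)).2 (Or.inr (Or.inr (Or.inl ⟨rfl, Or.inr rfl⟩)))⟩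
      · refine ⟨i + 1, (hchar x (i + 1)).2 (Or.inr (Or.inr (Or.inr ⟨by omega, ?_⟩)))⟩
        simpa using hi
  · -- convexity
    rintro (_ | x) i j k hij hjk hti htk
    · rw [hnone] at *; omega
    · rw [hchar] at hti htk ⊢
      obtain ⟨pi, hxi, hpi⟩ : ∃ p, x ∈ bag p ∧ ((i ≤ i0 ∧ p = i) ∨ (i0 < i ∧ p = i - 1)) := by
        rcases hti with ⟨h, hm⟩ | ⟨h, hm⟩ | ⟨h, hm⟩ | ⟨h, hm⟩
        · exact ⟨i, hm, Or.inl ⟨by omega, rfl⟩⟩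
        · refine ⟨i, ?_, Or.inl ⟨by omega, rfl⟩⟩
          subst h
          rcases hm with hc | rfl
          · exact hCsub _ hc
          · exact hu
        · refine ⟨i - 1, ?_, Or.inr ⟨by omega, rfl⟩⟩
          have : i - 1 = i0 := by omega
          rw [this]
          rcases hm with hc | rfl
          · exact hCsub _ hc
          · exact hv
        · exact ⟨i - 1, hm, Or.inr ⟨by omega, rfl⟩⟩
      obtain ⟨pk, hxk, hpk⟩ : ∃ p, x ∈ bag p ∧ ((k ≤ i0 ∧ p = k) ∨ (i0 < k ∧ p = k - 1)) := by
        rcases htk with ⟨h, hm⟩ | ⟨h, hm⟩ | ⟨h, hm⟩ | ⟨h, hm⟩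
        · exact ⟨k, hm, Or.inl ⟨by omega, rfl⟩⟩
        · refine ⟨k, ?_, Or.inl ⟨by omega, rfl⟩⟩
          subst h
          rcases hm with hc | rfl
          · exact hCsub _ hc
          · exact hu
        · refine ⟨k - 1, ?_, Or.inr ⟨by omega, rfl⟩⟩
          have : k - 1 = i0 := by omega
          rw [this]
          rcases hm with hc | rfl
          · exact hCsub _ hc
          · exact hv
        · exact ⟨k - 1, hm, Or.inr ⟨by omega, rfl⟩⟩
      by_cases hj1 : j < i0
      · exact Or.inl ⟨hj1, hconv x pi j pk (by omega) (by omega) hxi hxk⟩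
      by_cases hj2 : j = i0
      · refine Or.inr (Or.inl ⟨hj2, ?_⟩)
        rcases hti with ⟨h, hm⟩ | ⟨h, hm⟩ | ⟨h, hm⟩ | ⟨h, hm⟩
        · -- i < i0, x ∈ bag i
          have hxj : x ∈ bag i0 := hconv x pi i0 pk (by omega) (by omega) hxi hxk
          rcases (hbag x).1 hxj with hc | rfl | rfl
          · exact Or.inl hc
          · exact Or.inr rfl
          · rcases hGv with hc | hlt
            · exact Or.inl hc
            · exact absurd hm (hlt i h)
        · exact hm
        · omega
        · omega
      by_cases hj3 : j = i0 + 1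
      · refine Or.inr (Or.inr (Or.inl ⟨hj3, ?_⟩))
        rcases htk with ⟨h, hm⟩ | ⟨h, hm⟩ | ⟨h, hm⟩ | ⟨h, hm⟩
        · omega
        · omega
        · exact hm
        · -- k ≥ i0+2, x ∈ bag (k-1)
          have hxj : x ∈ bag i0 := hconv x pi i0 pk (by omega) (by omega) hxi hxk
          rcases (hbag x).1 hxj with hc | rfl | rfl
          · exact Or.inl hc
          · rcases hGu with hc | hrt
            · exact Or.inl hc
            · exact absurd hm (hrt (k - 1) (by omega))
          · exact Or.inr rfl
      · refine Or.inr (Or.inr (Or.inr ⟨by omega, ?_⟩))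
        exact hconv x pi (j - 1) pk (by omega) (by omega) hxi hxk
  · -- cards
    intro j
    simp only [hbag'def]
    split_ifs with h1 h2 h3
    · exact le_trans Finset.card_image_le (hcard j)
    · refine le_trans (Finset.card_insert_le _ _) ?_
      have h4 : ((insert u C).image some).card ≤ C.card + 1 :=
        le_trans Finset.card_image_le (Finset.card_insert_le _ _)
      omega
    · refine le_trans (Finset.card_insert_le _ _) ?_
      have h4 : ((insert v C).image some).card ≤ C.card + 1 :=
        le_trans Finset.card_image_le (Finset.card_insert_le _ _)
      omega
    · exact le_trans Finset.card_image_le (hcard (j - 1))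
  · -- edges
    have hmis : ∀ (S : Finset V) (x : V), (some x ∈ S.image some) ↔ x ∈ S := by
      intro S x
      simp only [Finset.mem_image, Option.some.injEq]
      constructor
      · rintro ⟨a, ha, rfl⟩; exact ha
      · intro h; exact ⟨x, h, rfl⟩
    have hmin : ∀ S : Finset V, ¬ (none ∈ S.image some) := by
      intro S h
      obtain ⟨a, _, ha⟩ := Finset.mem_image.mp h
      exact Option.some_ne_none a ha
    have himg : ∀ i : ℕ, i ≠ i0 → bag' (if i < i0 then i else i + 1) = (bag i).image some := by
      intro i hi
      by_cases h : i < i0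
      · simp only [hbag'def, if_pos h]
      · have h2 : ¬ (i + 1 < i0) := by omega
        have h3 : ¬ (i + 1 = i0) := by omega
        have h4 : ¬ (i + 1 = i0 + 1) := by omega
        simp only [hbag'def, if_neg h, if_neg h2, if_neg h3, if_neg h4]
        congr 1
    have hS1 : SpecW bag' owner' w (some u) none i0 := by
      refine ⟨by simp [howner'def], C.image some, ?_, le_trans Finset.card_image_le hC, ?_, ?_⟩
      · rintro (_ | x)
        · rw [hnone]
          constructor
          · intro _; exact Or.inr (Or.inr rfl)
          · intro _; exact Or.inl rfl
        · rw [hchar]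
          constructor
          · rintro (⟨h, _⟩ | ⟨_, hm⟩ | ⟨h, _⟩ | ⟨h, _⟩)
            · omega
            · rcases hm with hc | rfl
              · exact Or.inl ((hmis C x).2 hc)
              · exact Or.inr (Or.inl rfl)
            · omega
            · omega
          · rintro (h | h | h)
            · exact Or.inr (Or.inl ⟨rfl, Or.inl ((hmis C x).1 h)⟩)
            · rw [Option.some.injEq] at h
              exact Or.inr (Or.inl ⟨rfl, Or.inr h⟩)
            · exact absurd h (Option.some_ne_none x)
      · by_cases huC : u ∈ C
        · exact Or.inl ((hmis C u).2 huC)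
        · have hrt : ∀ j, i0 < j → u ∉ bag j := hGu.resolve_left huC
          refine Or.inr (fun j hj hmem => ?_)
          rw [hchar] at hmem
          rcases hmem with ⟨h, _⟩ | ⟨h, _⟩ | ⟨_, hm⟩ | ⟨h, hm⟩
          · omega
          · omega
          · rcases hm with hc | h
            · exact huC hc
            · exact huv' h
          · exact hrt (j - 1) (by omega) hm
      · refine Or.inr (fun j hj hmem => ?_)
        rw [hnone] at hmem
        omega
    have hS2 : SpecW bag' owner' w none (some v) (i0 + 1) := by
      refine ⟨by simp [howner'def], C.image some, ?_, le_trans Finset.card_image_le hC, ?_, ?_⟩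
      · rintro (_ | x)
        · rw [hnone]
          constructor
          · intro _; exact Or.inr (Or.inl rfl)
          · intro _; exact Or.inr rfl
        · rw [hchar]
          constructor
          · rintro (⟨h, _⟩ | ⟨h, _⟩ | ⟨_, hm⟩ | ⟨h, _⟩)
            · omega
            · omega
            · rcases hm with hc | rfl
              · exact Or.inl ((hmis C x).2 hc)
              · exact Or.inr (Or.inr rfl)
            · omega
          · rintro (h | h | h)
            · exact Or.inr (Or.inr (Or.inl ⟨rfl, Or.inl ((hmis C x).1 h)⟩))
            · exact absurd h (Option.some_ne_none x)
            · rw [Option.some.injEq] at h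
              exact Or.inr (Or.inr (Or.inl ⟨rfl, Or.inr h⟩))
      · refine Or.inr (fun j hj hmem => ?_)
        rw [hnone] at hmem
        omega
      · by_cases hvC : v ∈ C
        · exact Or.inl ((hmis C v).2 hvC)
        · have hlt : ∀ j, j < i0 → v ∉ bag j := hGv.resolve_left hvC
          refine Or.inr (fun j hj hmem => ?_)
          rw [hchar] at hmem
          rcases hmem with ⟨h, hm⟩ | ⟨_, hm⟩ | ⟨h, _⟩ | ⟨h, _⟩
          · exact hlt j h hm
          · rcases hm with hc | h
            · exact hvC hc
            · exact huv' h.symm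
          · omega
          · omega
    have hSP : ∀ (x y : V) (i : ℕ), s(x, y) ≠ s(u, v) → SpecW bag owner w x y i →
        SpecW bag' owner' w (some x) (some y) (if i < i0 then i else i + 1) := by
      rintro x y i hsne ⟨hoi, Cxy, hbagxy, hCxy, hgx, hgy⟩
      have hine : i ≠ i0 := by
        intro h
        rw [h, hown, Option.some.injEq, Prod.mk.injEq] at hoi
        exact hsne (by rw [hoi.1, hoi.2])
      have hxbi : x ∈ bag i := (hbagxy x).2 (Or.inr (Or.inl rfl))
      have hybi : y ∈ bag i := (hbagxy y).2 (Or.inr (Or.inr rfl))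
      refine ⟨?_, Cxy.image some, ?_, le_trans Finset.card_image_le hCxy, ?_, ?_⟩
      · by_cases h : i < i0
        · simp only [howner'def, if_pos h, hoi, Option.map_some]
        · have h2 : ¬ (i + 1 < i0) := by omega
          have h3 : ¬ (i + 1 = i0) := by omega
          have h4 : ¬ (i + 1 = i0 + 1) := by omega
          simp only [howner'def, if_neg h, if_neg h2, if_neg h3, if_neg h4]
          have h5 : i + 1 - 1 = i := by omega
          rw [h5, hoi, Option.map_some]
      · rintro (_ | z)
        · rw [himg i hine]
          constructor
          · intro h
            exact absurd h (hmin _)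
          · rintro (h | h | h)
            · exact absurd h (hmin _)
            · exact absurd h.symm (Option.some_ne_none x)
            · exact absurd h.symm (Option.some_ne_none y)
        · rw [himg i hine]
          constructor
          · intro h
            rcases (hbagxy z).1 ((hmis _ z).1 h) with hc | rfl | rfl
            · exact Or.inl ((hmis _ z).2 hc)
            · exact Or.inr (Or.inl rfl)
            · exact Or.inr (Or.inr rfl)
          · rintro (h | h | h)
            · exact (hmis _ z).2 ((hbagxy z).2 (Or.inl ((hmis _ z).1 h)))
            · rw [Option.some.injEq] at h
              subst h
              exact (hmis _ z).2 hxbi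
            · rw [Option.some.injEq] at h
              subst h
              exact (hmis _ z).2 hybi
      · rcases hgx with hc | hrt
        · exact Or.inl ((hmis _ x).2 hc)
        · refine Or.inr (fun j hj hmem => ?_)
          rw [hchar] at hmem
          rcases hmem with ⟨h, hm⟩ | ⟨h, hm⟩ | ⟨h, hm⟩ | ⟨h, hm⟩
          · refine hrt j ?_ hm
            split_ifs at hj <;> omega
          · have hxi0 : x ∈ bag i0 := by
              rcases hm with hc | rfl
              · exact hCsub _ hc
              · exact hu
            have hii : i < i0 := by split_ifs at hj <;> omega
            exact hrt i0 hii hxi0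
          · have hxi0 : x ∈ bag i0 := by
              rcases hm with hc | rfl
              · exact hCsub _ hc
              · exact hv
            have hii : i < i0 := by split_ifs at hj <;> omega
            exact hrt i0 hii hxi0
          · refine hrt (j - 1) ?_ hm
            split_ifs at hj <;> omega
      · rcases hgy with hc | hlt
        · exact Or.inl ((hmis _ y).2 hc)
        · refine Or.inr (fun j hj hmem => ?_)
          rw [hchar] at hmem
          rcases hmem with ⟨h, hm⟩ | ⟨h, hm⟩ | ⟨h, hm⟩ | ⟨h, hm⟩
          · refine hlt j ?_ hm
            split_ifs at hj <;> omega
          · have hyi0 : y ∈ bag i0 := by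
              rcases hm with hc | rfl
              · exact hCsub _ hc
              · exact hu
            have hii : i0 < i := by split_ifs at hj <;> omega
            exact hlt i0 hii hyi0
          · have hyi0 : y ∈ bag i0 := by
              rcases hm with hc | rfl
              · exact hCsub _ hc
              · exact hv
            have hii : i0 < i := by split_ifs at hj <;> omega
            exact hlt i0 hii hyi0
          · refine hlt (j - 1) ?_ hm
            split_ifs at hj <;> omega
    intro a b hab
    rw [subdivideEdge_adj] at hab
    rcases hab with ⟨x, y, rfl, rfl, hxy, hs⟩ | ⟨rfl, (rfl | rfl)⟩ | ⟨rfl, (rfl | rfl)⟩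
    · rcases hedge x y hxy with ⟨i, hx, hy, hc⟩ | ⟨i, hsp | hsp⟩
      · have hine : i ≠ i0 := fun h => hbig (h ▸ hc)
        refine Or.inl ⟨if i < i0 then i else i + 1, ?_, ?_, ?_⟩
        · rw [himg i hine]
          exact (hmis _ x).2 hx
        · rw [himg i hine]
          exact (hmis _ y).2 hy
        · rw [himg i hine, Finset.card_image_of_injective _ (Option.some_injective V)]
          exact hc
      · exact Or.inr ⟨_, Or.inl (hSP x y i hs hsp)⟩
      · exact Or.inr ⟨_, Or.inr (hSP y x i (by rwa [Sym2.eq_swap]) hsp)⟩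
    · exact Or.inr ⟨i0, Or.inr hS1⟩
    · exact Or.inr ⟨i0 + 1, Or.inl hS2⟩
    · exact Or.inr ⟨i0, Or.inl hS1⟩
    · exact Or.inr ⟨i0 + 1, Or.inr hS2⟩

lemma natPD_subdivide_small {V : Type} (G : SimpleGraph V) (u v : V) (huv : G.Adj u v) (w : ℕ)
    (n : ℕ) (bag : ℕ → Finset V) (owner : ℕ → Option (V × V))
    (hn : 0 < n) (hempty : ∀ i, n ≤ i → bag i = ∅)
    (hcover : ∀ x, ∃ i, x ∈ bag i)
    (hconv : ∀ x : V, ∀ i j k : ℕ, i ≤ j → j ≤ k → x ∈ bag i → x ∈ bag k → x ∈ bag j)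
    (hcard : ∀ i, (bag i).card ≤ w + 3)
    (hedge : ∀ a b, G.Adj a b → SmallW bag w a b ∨
      ∃ i, SpecW bag owner w a b i ∨ SpecW bag owner w b a i)
    (i0 : ℕ) (hu : u ∈ bag i0) (hv : v ∈ bag i0) (hsmall : (bag i0).card ≤ w + 1) :
    NatPD (subdivideEdge G u v) w := by
  classical
  have hi0n : i0 < n := by
    by_contra h
    rw [hempty i0 (by omega)] at hu
    simp at hu
  set bag' : ℕ → Finset (Option V) := fun j =>
    if j ≤ i0 then (bag j).image some
    else if j = i0 + 1 ∨ j = i0 + 2 then insert none ((bag i0).image some)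
    else (bag (j - 2)).image some with hbag'def
  set owner' : ℕ → Option (Option V × Option V) := fun j =>
    if j ≤ i0 then (owner j).map (fun p => (some p.1, some p.2))
    else if j = i0 + 1 then some (some u, none)
    else if j = i0 + 2 then some (none, some v)
    else (owner (j - 2)).map (fun p => (some p.1, some p.2)) with howner'def
  have hmis : ∀ (S : Finset V) (x : V), (some x ∈ S.image some) ↔ x ∈ S := by
    intro S x
    simp only [Finset.mem_image, Option.some.injEq]
    constructor
    · rintro ⟨a, ha, rfl⟩; exact ha
    · intro h; exact ⟨x, h, rfl⟩
  have hmin : ∀ S : Finset V, ¬ (none ∈ S.image some) := by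
    intro S h
    obtain ⟨a, _, ha⟩ := Finset.mem_image.mp h
    exact Option.some_ne_none a ha
  have hchar : ∀ (x : V) (j : ℕ), (some x ∈ bag' j ↔
      ((j ≤ i0 ∧ x ∈ bag j) ∨ ((j = i0 + 1 ∨ j = i0 + 2) ∧ x ∈ bag i0) ∨
       (i0 + 3 ≤ j ∧ x ∈ bag (j - 2)))) := by
    intro x j
    simp only [hbag'def]
    split_ifs with h1 h2
    · rw [hmis]
      constructor
      · intro h; exact Or.inl ⟨h1, h⟩
      · rintro (⟨_, h⟩ | ⟨h, _⟩ | ⟨h, _⟩)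
        · exact h
        · omega
        · omega
    · rw [Finset.mem_insert]
      constructor
      · rintro (h | h)
        · exact absurd h (Option.some_ne_none x)
        · exact Or.inr (Or.inl ⟨h2, (hmis _ x).1 h⟩)
      · rintro (⟨h, _⟩ | ⟨_, h⟩ | ⟨h, _⟩)
        · omega
        · exact Or.inr ((hmis _ x).2 h)
        · omega
    · rw [hmis]
      constructor
      · intro h; exact Or.inr (Or.inr ⟨by omega, h⟩)
      · rintro (⟨h, _⟩ | ⟨h, _⟩ | ⟨_, h⟩)
        · omega
        · omega
        · exact h
  have hnone : ∀ j : ℕ, (none ∈ bag' j ↔ j = i0 + 1 ∨ j = i0 + 2) := by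
    intro j
    simp only [hbag'def]
    split_ifs with h1 h2
    · constructor
      · intro h; exact absurd h (hmin _)
      · intro h; omega
    · constructor
      · intro _; exact h2
      · intro _; exact Finset.mem_insert_self _ _
    · constructor
      · intro h; exact absurd h (hmin _)
      · intro h; omega
  refine ⟨n + 2, bag', owner', by omega, ?_, ?_, ?_, ?_, ?_⟩
  · intro i hi
    refine Finset.eq_empty_of_forall_notMem ?_
    rintro (_ | x) ht
    · rw [hnone] at ht; omega
    · rw [hchar] at ht
      rcases ht with ⟨h, _⟩ | ⟨h, _⟩ | ⟨_, hm⟩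
      · omega
      · omega
      · rw [hempty (i - 2) (by omega)] at hm; simp at hm
  · rintro (_ | x)
    · exact ⟨i0 + 1, (hnone (i0 + 1)).2 (Or.inl rfl)⟩
    · obtain ⟨i, hi⟩ := hcover x
      by_cases h : i ≤ i0
      · exact ⟨i, (hchar x i).2 (Or.inl ⟨h, hi⟩)⟩
      · refine ⟨i + 2, (hchar x (i + 2)).2 (Or.inr (Or.inr ⟨by omega, ?_⟩))⟩
        simpa using hi
  · rintro (_ | x) i j k hij hjk hti htk
    · rw [hnone] at *; omega
    · rw [hchar] at hti htk ⊢
      obtain ⟨pi, hxi, hpi⟩ : ∃ p, x ∈ bag p ∧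
          ((i ≤ i0 ∧ p = i) ∨ (i0 + 1 ≤ i ∧ i ≤ i0 + 2 ∧ p = i0) ∨ (i0 + 3 ≤ i ∧ p = i - 2)) := by
        rcases hti with ⟨h, hm⟩ | ⟨h, hm⟩ | ⟨h, hm⟩
        · exact ⟨i, hm, Or.inl ⟨h, rfl⟩⟩
        · exact ⟨i0, hm, Or.inr (Or.inl ⟨by omega, by omega, rfl⟩)⟩
        · exact ⟨i - 2, hm, Or.inr (Or.inr ⟨h, rfl⟩)⟩
      obtain ⟨pk, hxk, hpk⟩ : ∃ p, x ∈ bag p ∧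
          ((k ≤ i0 ∧ p = k) ∨ (i0 + 1 ≤ k ∧ k ≤ i0 + 2 ∧ p = i0) ∨ (i0 + 3 ≤ k ∧ p = k - 2)) := by
        rcases htk with ⟨h, hm⟩ | ⟨h, hm⟩ | ⟨h, hm⟩
        · exact ⟨k, hm, Or.inl ⟨h, rfl⟩⟩
        · exact ⟨i0, hm, Or.inr (Or.inl ⟨by omega, by omega, rfl⟩)⟩
        · exact ⟨k - 2, hm, Or.inr (Or.inr ⟨h, rfl⟩)⟩
      by_cases hj1 : j ≤ i0
      · exact Or.inl ⟨hj1, hconv x pi j pk (by omega) (by omega) hxi hxk⟩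
      by_cases hj2 : j = i0 + 1 ∨ j = i0 + 2
      · exact Or.inr (Or.inl ⟨hj2, hconv x pi i0 pk (by omega) (by omega) hxi hxk⟩)
      · exact Or.inr (Or.inr ⟨by omega, hconv x pi (j - 2) pk (by omega) (by omega) hxi hxk⟩)
  · intro j
    simp only [hbag'def]
    split_ifs with h1 h2
    · exact le_trans Finset.card_image_le (hcard j)
    · refine le_trans (Finset.card_insert_le _ _) ?_
      have h4 : ((bag i0).image some).card ≤ (bag i0).card := Finset.card_image_le
      omega
    · exact le_trans Finset.card_image_le (hcard (j - 2))
  · -- edges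
    have himg1 : ∀ i : ℕ, i ≤ i0 → bag' i = (bag i).image some := by
      intro i hi
      simp only [hbag'def, if_pos hi]
    have himg2 : ∀ i : ℕ, i0 < i → bag' (i + 2) = (bag i).image some := by
      intro i hi
      have h1 : ¬ (i + 2 ≤ i0) := by omega
      have h2 : ¬ (i + 2 = i0 + 1 ∨ i + 2 = i0 + 2) := by omega
      simp only [hbag'def, if_neg h1, if_neg h2]
      congr 1
    have himg : ∀ i : ℕ, bag' (if i ≤ i0 then i else i + 2) = (bag i).image some := by
      intro i
      by_cases h : i ≤ i0
      · rw [if_pos h]; exact himg1 i h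
      · rw [if_neg h]; exact himg2 i (by omega)
    have hDchar : ∀ (t : Option V) (j : ℕ), j = i0 + 1 ∨ j = i0 + 2 →
        (t ∈ bag' j ↔ t ∈ (bag i0).image some ∨ t = some u ∨ t = none) := by
      rintro (_ | z) j hj
      · rw [hnone]
        constructor
        · intro _; exact Or.inr (Or.inr rfl)
        · intro _; exact hj
      · rw [hchar]
        constructor
        · rintro (⟨h, _⟩ | ⟨_, h⟩ | ⟨h, _⟩)
          · omega
          · exact Or.inl ((hmis _ z).2 h)
          · omega
        · rintro (h | h | h)
          · exact Or.inr (Or.inl ⟨hj, (hmis _ z).1 h⟩)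
          · rw [Option.some.injEq] at h
            subst h
            exact Or.inr (Or.inl ⟨hj, hu⟩)
          · exact absurd h (Option.some_ne_none z)
    have hS1 : SpecW bag' owner' w (some u) none (i0 + 1) := by
      refine ⟨?_, (bag i0).image some, ?_, le_trans Finset.card_image_le hsmall, ?_, ?_⟩
      · have h1 : ¬ (i0 + 1 ≤ i0) := by omega
        simp [howner'def, h1]
      · intro t
        exact hDchar t (i0 + 1) (Or.inl rfl)
      · exact Or.inl ((hmis _ u).2 hu)
      · refine Or.inr (fun j hj hmem => ?_)
        rw [hnone] at hmem
        omega
    have hS2 : SpecW bag' owner' w none (some v) (i0 + 2) := by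
      refine ⟨?_, (bag i0).image some, ?_, le_trans Finset.card_image_le hsmall, ?_, ?_⟩
      · have h1 : ¬ (i0 + 2 ≤ i0) := by omega
        have h2 : ¬ (i0 + 2 = i0 + 1) := by omega
        simp [howner'def, h1, h2]
      · intro t
        rw [hDchar t (i0 + 2) (Or.inr rfl)]
        constructor
        · rintro (h | h | h)
          · exact Or.inl h
          · rw [h]
            exact Or.inl ((hmis _ u).2 hu)
          · exact Or.inr (Or.inl h)
        · rintro (h | h | h)
          · exact Or.inl h
          · exact Or.inr (Or.inr h)
          · rw [h]
            exact Or.inl ((hmis _ v).2 hv)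
      · refine Or.inr (fun j hj hmem => ?_)
        rw [hnone] at hmem
        omega
      · exact Or.inl ((hmis _ v).2 hv)
    have hSP : ∀ (x y : V) (i : ℕ), i ≠ i0 → SpecW bag owner w x y i →
        SpecW bag' owner' w (some x) (some y) (if i ≤ i0 then i else i + 2) := by
      rintro x y i hine ⟨hoi, Cxy, hbagxy, hCxy, hgx, hgy⟩
      have hxbi : x ∈ bag i := (hbagxy x).2 (Or.inr (Or.inl rfl))
      have hybi : y ∈ bag i := (hbagxy y).2 (Or.inr (Or.inr rfl))
      refine ⟨?_, Cxy.image some, ?_, le_trans Finset.card_image_le hCxy, ?_, ?_⟩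
      · by_cases h : i ≤ i0
        · simp only [howner'def, if_pos h, hoi, Option.map_some]
        · have h1 : ¬ (i + 2 ≤ i0) := by omega
          have h2 : ¬ (i + 2 = i0 + 1) := by omega
          have h3 : ¬ (i + 2 = i0 + 2) := by omega
          simp only [howner'def, if_neg h, if_neg h1, if_neg h2, if_neg h3]
          have h5 : i + 2 - 2 = i := by omega
          rw [h5, hoi, Option.map_some]
      · rintro (_ | z)
        · rw [himg i]
          constructor
          · intro h
            exact absurd h (hmin _)
          · rintro (h | h | h)
            · exact absurd h (hmin _)
            · exact absurd h.symm (Option.some_ne_none x)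
            · exact absurd h.symm (Option.some_ne_none y)
        · rw [himg i]
          constructor
          · intro h
            rcases (hbagxy z).1 ((hmis _ z).1 h) with hc | rfl | rfl
            · exact Or.inl ((hmis _ z).2 hc)
            · exact Or.inr (Or.inl rfl)
            · exact Or.inr (Or.inr rfl)
          · rintro (h | h | h)
            · exact (hmis _ z).2 ((hbagxy z).2 (Or.inl ((hmis _ z).1 h)))
            · rw [Option.some.injEq] at h
              subst h
              exact (hmis _ z).2 hxbi
            · rw [Option.some.injEq] at h
              subst h
              exact (hmis _ z).2 hybi
      · rcases hgx with hc | hrt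
        · exact Or.inl ((hmis _ x).2 hc)
        · refine Or.inr (fun j hj hmem => ?_)
          rw [hchar] at hmem
          rcases hmem with ⟨h, hm⟩ | ⟨h, hm⟩ | ⟨h, hm⟩
          · refine hrt j ?_ hm
            split_ifs at hj <;> omega
          · refine hrt i0 ?_ hm
            split_ifs at hj <;> omega
          · refine hrt (j - 2) ?_ hm
            split_ifs at hj <;> omega
      · rcases hgy with hc | hlt
        · exact Or.inl ((hmis _ y).2 hc)
        · refine Or.inr (fun j hj hmem => ?_)
          rw [hchar] at hmem
          rcases hmem with ⟨h, hm⟩ | ⟨h, hm⟩ | ⟨h, hm⟩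
          · refine hlt j ?_ hm
            split_ifs at hj <;> omega
          · refine hlt i0 ?_ hm
            split_ifs at hj <;> omega
          · refine hlt (j - 2) ?_ hm
            split_ifs at hj <;> omega
    intro a b hab
    rw [subdivideEdge_adj] at hab
    rcases hab with ⟨x, y, rfl, rfl, hxy, hs⟩ | ⟨rfl, (rfl | rfl)⟩ | ⟨rfl, (rfl | rfl)⟩
    · rcases hedge x y hxy with ⟨i, hx, hy, hc⟩ | ⟨i, hsp | hsp⟩
      · refine Or.inl ⟨if i ≤ i0 then i else i + 2, ?_, ?_, ?_⟩
        · rw [himg i]; exact (hmis _ x).2 hx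
        · rw [himg i]; exact (hmis _ y).2 hy
        · rw [himg i, Finset.card_image_of_injective _ (Option.some_injective V)]
          exact hc
      · by_cases hie : i = i0
        · subst hie
          obtain ⟨_, Cxy, hbagxy, _, _, _⟩ := hsp
          refine Or.inl ⟨i, ?_, ?_, ?_⟩
          · rw [himg1 i le_rfl]
            exact (hmis _ x).2 ((hbagxy x).2 (Or.inr (Or.inl rfl)))
          · rw [himg1 i le_rfl]
            exact (hmis _ y).2 ((hbagxy y).2 (Or.inr (Or.inr rfl)))
          · rw [himg1 i le_rfl, Finset.card_image_of_injective _ (Option.some_injective V)]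
            exact hsmall
        · exact Or.inr ⟨_, Or.inl (hSP x y i hie hsp)⟩
      · by_cases hie : i = i0
        · subst hie
          obtain ⟨_, Cxy, hbagxy, _, _, _⟩ := hsp
          refine Or.inl ⟨i, ?_, ?_, ?_⟩
          · rw [himg1 i le_rfl]
            exact (hmis _ x).2 ((hbagxy x).2 (Or.inr (Or.inr rfl)))
          · rw [himg1 i le_rfl]
            exact (hmis _ y).2 ((hbagxy y).2 (Or.inr (Or.inl rfl)))
          · rw [himg1 i le_rfl, Finset.card_image_of_injective _ (Option.some_injective V)]
            exact hsmall
        · exact Or.inr ⟨_, Or.inr (hSP y x i hie hsp)⟩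
    · exact Or.inr ⟨i0 + 1, Or.inr hS1⟩
    · exact Or.inr ⟨i0 + 2, Or.inl hS2⟩
    · exact Or.inr ⟨i0 + 1, Or.inl hS1⟩
    · exact Or.inr ⟨i0 + 2, Or.inr hS2⟩

lemma subdivideEdge_comm {V : Type} (G : SimpleGraph V) (u v : V) :
    subdivideEdge G u v = subdivideEdge G v u := by
  ext a b
  rw [subdivideEdge_adj, subdivideEdge_adj]
  have hs : s(u, v) = s(v, u) := Sym2.eq_swap
  constructor <;>
  · rintro (⟨x, y, rfl, rfl, hxy, h⟩ | ⟨rfl, h⟩ | ⟨rfl, h⟩)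
    · exact Or.inl ⟨x, y, rfl, rfl, hxy, by rw [← hs] at *; tauto⟩
    · exact Or.inr (Or.inl ⟨rfl, h.symm⟩)
    · exact Or.inr (Or.inr ⟨rfl, h.symm⟩)


lemma natPD_step {V : Type} (G : SimpleGraph V) (u v : V) (huv : G.Adj u v) (w : ℕ)
    (h : NatPD G w) : NatPD (subdivideEdge G u v) w := by
  obtain ⟨n, bag, owner, hn, hempty, hcover, hconv, hcard, hedge⟩ := h
  by_cases hs : SmallW bag w u v
  · obtain ⟨i0, hu, hv, hc⟩ := hs
    exact natPD_subdivide_small G u v huv w n bag owner hn hempty hcover hconv hcard hedge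
      i0 hu hv hc
  · rcases hedge u v huv with hsm | ⟨i0, hsp | hsp⟩
    · exact absurd hsm hs
    · exact natPD_subdivide_spec G u v huv w n bag owner hn hempty hcover hconv hcard hedge
        hs i0 hsp
    · rw [subdivideEdge_comm]
      refine natPD_subdivide_spec G v u huv.symm w n bag owner hn hempty hcover hconv hcard
        hedge ?_ i0 hsp
      rintro ⟨i, h1, h2, h3⟩
      exact hs ⟨i, h2, h1, h3⟩

lemma natPD_of_subdivision : ∀ {V : Type} {G : SimpleGraph V} {W : Type} {G' : SimpleGraph W},
    IsSubdivisionOf G G' → ∀ w, NatPD G w → NatPD G' w := by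
  intro V G W G' h
  induction h with
  | refl G => exact fun w hw => hw
  | step G u v huv h ih => exact fun w hw => ih w (natPD_step G u v huv w hw)

lemma natPD_of_decomp {V : Type} (G : SimpleGraph V) {n : ℕ} (bag : Fin n → Finset V)
    (hd : IsTreeDecomp G (SimpleGraph.pathGraph n) bag) (w : ℕ)
    (hw : ∀ i, (bag i).card ≤ w + 1) : NatPD G w := by
  have hn : 0 < n := Fin.pos_iff_nonempty.mpr hd.1.1.nonempty
  refine ⟨n, fun i => if h : i < n then bag ⟨i, h⟩ else ∅, fun _ => none, hn, ?_, ?_, ?_, ?_, ?_⟩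
  · intro i hi
    beta_reduce
    rw [dif_neg (by omega)]
  · intro x
    obtain ⟨i, hi⟩ := hd.2.1 x
    refine ⟨i.val, ?_⟩
    beta_reduce
    rw [dif_pos i.isLt]
    exact hi
  · intro x i j k hij hjk hxi hxk
    beta_reduce at hxi hxk ⊢
    have hin : i < n := by
      by_contra h
      rw [dif_neg h] at hxi
      simp at hxi
    have hkn : k < n := by
      by_contra h
      rw [dif_neg h] at hxk
      simp at hxk
    have hjn : j < n := by omega
    rw [dif_pos hin] at hxi
    rw [dif_pos hkn] at hxk
    rw [dif_pos hjn]
    have hreach := (hd.2.2.2 x).preconnected ⟨⟨i, hin⟩, hxi⟩ ⟨⟨k, hkn⟩, hxk⟩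
    obtain ⟨p⟩ := hreach
    exact walk_pass p ⟨j, hjn⟩ (Or.inl ⟨by rw [Fin.le_def]; exact hij, by rw [Fin.le_def]; exact hjk⟩)
  · intro i
    beta_reduce
    by_cases h : i < n
    · rw [dif_pos h]
      exact le_trans (hw _) (by omega)
    · rw [dif_neg h]
      simp
  · intro a b hab
    obtain ⟨i, hai, hbi⟩ := hd.2.2.1 a b hab
    refine Or.inl ⟨i.val, ?_, ?_, ?_⟩
    · beta_reduce
      rw [dif_pos i.isLt]
      exact hai
    · beta_reduce
      rw [dif_pos i.isLt]
      exact hbi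
    · beta_reduce
      rw [dif_pos i.isLt]
      exact hw i

lemma pathwidth_le_of_natPD {W : Type} (G' : SimpleGraph W) (w : ℕ) (h : NatPD G' w) :
    pathwidth G' ≤ w + 2 := by
  obtain ⟨n, bag, owner, hn, hempty, hcover, hconv, hcard, hedge⟩ := h
  have hbound : ∀ (x : W) (i : ℕ), x ∈ bag i → i < n := by
    intro x i hi
    by_contra h
    rw [hempty i (by omega)] at hi
    simp at hi
  apply Nat.sInf_le
  refine ⟨n, fun i => bag i.val, ⟨pathGraph_isTree hn, ?_, ?_, ?_⟩, fun i => hcard i.val⟩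
  · intro x
    obtain ⟨i, hi⟩ := hcover x
    exact ⟨⟨i, hbound x i hi⟩, hi⟩
  · intro a b hab
    rcases hedge a b hab with ⟨i, ha, hb, _⟩ | ⟨i, hsp | hsp⟩
    · exact ⟨⟨i, hbound a i ha⟩, ha, hb⟩
    · obtain ⟨_, C, hbagC, _, _, _⟩ := hsp
      have ha : a ∈ bag i := (hbagC a).2 (Or.inr (Or.inl rfl))
      have hb : b ∈ bag i := (hbagC b).2 (Or.inr (Or.inr rfl))
      exact ⟨⟨i, hbound a i ha⟩, ha, hb⟩
    · obtain ⟨_, C, hbagC, _, _, _⟩ := hsp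
      have ha : a ∈ bag i := (hbagC a).2 (Or.inr (Or.inr rfl))
      have hb : b ∈ bag i := (hbagC b).2 (Or.inr (Or.inl rfl))
      exact ⟨⟨i, hbound a i ha⟩, ha, hb⟩
  · intro x
    apply interval_induce_connected
    · obtain ⟨i, hi⟩ := hcover x
      exact ⟨⟨i, hbound x i hi⟩, hi⟩
    · intro i j k hi hk hij hjk
      exact hconv x i.val j.val k.val (Fin.le_def.mp hij) (Fin.le_def.mp hjk) hi hk

/-- If the finite simple graph `G'` is obtained from the finite simple graph `G` by subdividing
each edge in some set `F` of edges of `G` an arbitrary finite number of times, then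
`pw(G') ≤ pw(G) + 2`. -/
theorem pathwidth_subdivision {V W : Type} [Fintype V] [Fintype W]
    (G : SimpleGraph V) (G' : SimpleGraph W) (hsub : IsSubdivisionOf G G') :
    pathwidth G' ≤ pathwidth G + 2 := by
  classical
  have hne : {w : ℕ | ∃ (n : ℕ) (bag : Fin n → Finset V),
      IsTreeDecomp G (SimpleGraph.pathGraph n) bag ∧ ∀ i, (bag i).card ≤ w + 1}.Nonempty := by
    refine ⟨Fintype.card V, 1, fun _ => Finset.univ,
      ⟨pathGraph_isTree one_pos, ?_, ?_, ?_⟩, ?_⟩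
    · intro x
      exact ⟨0, Finset.mem_univ x⟩
    · intro a b _
      exact ⟨0, Finset.mem_univ a, Finset.mem_univ b⟩
    · intro x
      apply interval_induce_connected
      · exact ⟨0, Finset.mem_univ x⟩
      · intro i j k _ _ _ _
        exact Finset.mem_univ x
    · intro i
      exact le_trans (Finset.card_le_univ _) (by simp)
  have hmem := Nat.sInf_mem hne
  obtain ⟨n, bagF, hdec, hcard⟩ := hmem
  exact pathwidth_le_of_natPD G' _
    (natPD_of_subdivision hsub _ (natPD_of_decomp G bagF hdec _ hcard))
end

section
/- There exists a sequence of finite simple graphs (G_h)_{h ∈ ℕ} of uniformly bounded treewidth but unbounded pathwidth: namely, the complete binary trees T_h satisfy tw(T_h) ≤ 1 for all h, while pw(T_h) → ∞ as h → ∞. In particular, for every c ∈ ℕ there exists a finite tree T with tw(T) ≤ 1 and pw(T) > c. -/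
/-- The complete binary tree of height `h`, as a simple graph: vertices are the binary strings
of length at most `h` (the root is the empty string, with `2 ^ (h + 1) - 1` vertices in total),
and each vertex `l` of length less than `h` is adjacent to its two children `x :: l`. -/
def completeBinaryTree (h : ℕ) : SimpleGraph {l : List Bool // l.length ≤ h} :=
  SimpleGraph.fromRel (fun a b => ∃ x : Bool, (b : List Bool) = x :: (a : List Bool))

open SimpleGraph

/-! ### A general acyclicity criterion -/

lemma acyclic_of_parent {V : Type} {G : SimpleGraph V} (f : V → ℕ) (par : V → V)
    (h1 : ∀ u v, G.Adj u v → f u = f v + 1 ∨ f v = f u + 1)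
    (h2 : ∀ u v, G.Adj u v → f v + 1 = f u → v = par u) : G.IsAcyclic := by
  classical
  intro a c hc
  obtain ⟨m, hm, hmax⟩ : ∃ m ∈ c.support, ∀ u ∈ c.support, f u ≤ f m := by
    obtain ⟨m, hm, hmax⟩ := (c.support.toFinset).exists_max_image f
      ⟨a, by simp [c.start_mem_support]⟩
    exact ⟨m, by simpa using hm, fun u hu => hmax u (by simpa using hu)⟩
  have hsupp : ∀ u ∈ (c.rotate m hm).support, f u ≤ f m := by
    intro u hu
    apply hmax
    rcases List.mem_cons.mp ((c.rotate m hm).support_eq_cons ▸ hu) with rfl | hu'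
    · exact hm
    · have := (c.support_rotate m hm).mem_iff.mp hu'
      exact c.support.tail_subset this
  have hc' := hc.rotate hm
  set d := c.rotate m hm with hd
  clear_value d
  cases d with
  | nil => exact hc'.not_of_nil
  | @cons _ b _ hadj p =>
    have h3 : 3 ≤ p.length + 1 := by simpa using hc'.three_le_length
    have hb : b ∈ (Walk.cons hadj p).support := by simp [Walk.support_cons]
    have hfb : f b ≤ f m := hsupp b hb
    have hfm : f m = f b + 1 := by
      rcases h1 m b hadj with h | h
      · exact h
      · omega
    have hbpar : b = par m := h2 m b hadj hfm.symm
    rw [Walk.cons_isCycle_iff] at hc'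
    obtain ⟨hp, hedge⟩ := hc'
    have hprev : p.reverse.IsPath := hp.reverse
    cases hrev : p.reverse with
    | nil =>
      have := congrArg Walk.length hrev
      simp at this
      omega
    | @cons _ q _ hadj2 p2 =>
      have hq : q ∈ p.support := by
        have : q ∈ p.reverse.support := by rw [hrev]; simp [Walk.support_cons]
        simpa using this
      have hqs : q ∈ (Walk.cons hadj p).support := by
        simp only [Walk.support_cons, List.mem_cons]
        exact Or.inr hq
      have hfq : f q ≤ f m := hsupp q hqs
      have hfm2 : f m = f q + 1 := by
        rcases h1 m q hadj2 with h | h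
        · exact h
        · omega
      have hqpar : q = par m := h2 m q hadj2 hfm2.symm
      have hqb : q = b := hqpar.trans hbpar.symm
      subst hqb
      rw [hrev] at hprev
      rw [Walk.cons_isPath_iff] at hprev
      have hnil : p2 = Walk.nil := (Walk.isPath_iff_eq_nil (p := p2)).mp hprev.1
      have hlen : p.reverse.length = 1 := by rw [hrev, hnil]; simp
      simp at hlen
      omega

/-! ### Interval lemmas for path decompositions -/

lemma walk_interval {n : ℕ} {S : Set (Fin n)} {a b : ↥S}
    (w : ((pathGraph n).induce S).Walk a b) :
    ∀ j : Fin n, (((a : Fin n) : ℕ) ≤ (j : ℕ) ∧ (j : ℕ) ≤ ((b : Fin n) : ℕ)) ∨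
      (((b : Fin n) : ℕ) ≤ (j : ℕ) ∧ (j : ℕ) ≤ ((a : Fin n) : ℕ)) → j ∈ S := by
  induction w with
  | @nil a =>
    intro j hj
    have : (j : ℕ) = ((a : Fin n) : ℕ) := by omega
    have : j = (a : Fin n) := Fin.ext this
    rw [this]; exact a.2
  | @cons x y z hadj w ih =>
    intro j hj
    by_cases hjx : j = (x : Fin n)
    · rw [hjx]; exact x.2
    · have hne : (j : ℕ) ≠ ((x : Fin n) : ℕ) := fun h => hjx (Fin.ext h)
      have hxy : ((x : Fin n) : ℕ) + 1 = ((y : Fin n) : ℕ) ∨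
          ((y : Fin n) : ℕ) + 1 = ((x : Fin n) : ℕ) := pathGraph_adj.mp hadj
      exact ih j (by omega)

lemma bag_interval {V : Type} {G : SimpleGraph V} {n : ℕ} {bag : Fin n → Finset V}
    (hd : IsTreeDecomp G (pathGraph n) bag) (v : V) {i j k : Fin n}
    (hi : v ∈ bag i) (hk : v ∈ bag k) (hij : i ≤ j) (hjk : j ≤ k) : v ∈ bag j := by
  obtain ⟨w⟩ := (hd.2.2.2 v).preconnected ⟨i, hi⟩ ⟨k, hk⟩
  exact walk_interval w j (Or.inl ⟨hij, hjk⟩)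

lemma decomp_interval_aux {V : Type} {G : SimpleGraph V} {n : ℕ} {bag : Fin n → Finset V}
    (hd : IsTreeDecomp G (pathGraph n) bag) {S : Set V} :
    ∀ {a b : ↥S} (_ : (G.induce S).Walk a b) {i k j : Fin n},
      (a : V) ∈ bag i → (b : V) ∈ bag k → i ≤ j → j ≤ k → ∃ v ∈ S, v ∈ bag j := by
  intro a b w
  induction w with
  | @nil a =>
    intro i k j hui hwk hij hjk
    exact ⟨a, a.2, bag_interval hd _ hui hwk hij hjk⟩
  | @cons x y z hadj w ih =>
    intro i k j hui hwk hij hjk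
    have hadj' : G.Adj x y := hadj
    obtain ⟨m, hxm, hym⟩ := hd.2.2.1 _ _ hadj'
    by_cases hjm : j ≤ m
    · exact ⟨x, x.2, bag_interval hd _ hui hxm hij hjm⟩
    · push_neg at hjm
      exact ih hym hwk hjm.le hjk

lemma decomp_interval {V : Type} {G : SimpleGraph V} {n : ℕ} {bag : Fin n → Finset V}
    (hd : IsTreeDecomp G (pathGraph n) bag) {S : Set V}
    (hS : (G.induce S).Connected) {u w : V} (hu : u ∈ S) (hw : w ∈ S)
    {i k j : Fin n} (hui : u ∈ bag i) (hwk : w ∈ bag k) (hij : i ≤ j) (hjk : j ≤ k) :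
    ∃ v ∈ S, v ∈ bag j := by
  obtain ⟨wk⟩ := hS.preconnected ⟨u, hu⟩ ⟨w, hw⟩
  exact decomp_interval_aux hd wk hui hwk hij hjk

/-! ### Traces of path decompositions -/

lemma trace_decomp {V W : Type} {G : SimpleGraph V} {H : SimpleGraph W}
    (f : W → V) (hinj : Function.Injective f)
    (hadj : ∀ a b, H.Adj a b → G.Adj (f a) (f b))
    {n : ℕ} {bag : Fin n → Finset V} (hd : IsTreeDecomp G (pathGraph n) bag) :
    IsTreeDecomp H (pathGraph n) (fun i => (bag i).preimage f hinj.injOn) := by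
  refine ⟨hd.1, ?_, ?_, ?_⟩
  · intro w
    obtain ⟨i, hi⟩ := hd.2.1 (f w)
    exact ⟨i, Finset.mem_preimage.mpr hi⟩
  · intro a b hab
    obtain ⟨i, hi1, hi2⟩ := hd.2.2.1 _ _ (hadj a b hab)
    exact ⟨i, Finset.mem_preimage.mpr hi1, Finset.mem_preimage.mpr hi2⟩
  · intro w
    have hset : {i | w ∈ (bag i).preimage f hinj.injOn} = {i | f w ∈ bag i} := by
      ext i; simp [Finset.mem_preimage]
    rw [hset]
    exact hd.2.2.2 (f w)

lemma card_preimage_le {V W : Type} [DecidableEq V] (f : W → V) (hinj : Function.Injective f)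
    (s : Finset V) : (s.preimage f hinj.injOn).card ≤ s.card := by
  classical
  calc (s.preimage f hinj.injOn).card = ((s.preimage f hinj.injOn).image f).card :=
        (Finset.card_image_of_injective _ hinj).symm
    _ ≤ s.card := Finset.card_le_card (by
        intro x hx
        obtain ⟨y, hy, rfl⟩ := Finset.mem_image.mp hx
        exact Finset.mem_preimage.mp hy)

/-- Lower-bound predicate: every path decomposition of `G` has a bag with more than `k`
vertices (morally, `pathwidth G ≥ k`). -/
def LB {V : Type} (G : SimpleGraph V) (k : ℕ) : Prop :=
  ∀ (n : ℕ) (bag : Fin n → Finset V), IsTreeDecomp G (pathGraph n) bag →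
    ∃ i, k + 1 ≤ (bag i).card

lemma LB_zero {V : Type} (G : SimpleGraph V) (hne : Nonempty V) : LB G 0 := by
  intro n bag hd
  obtain ⟨v⟩ := hne
  obtain ⟨i, hi⟩ := hd.2.1 v
  exact ⟨i, Finset.card_pos.mpr ⟨v, hi⟩⟩

lemma LB_of_map {V W : Type} {G : SimpleGraph V} {H : SimpleGraph W}
    (f : W → V) (hinj : Function.Injective f)
    (hadj : ∀ a b, H.Adj a b → G.Adj (f a) (f b))
    {k : ℕ} (hH : LB H k) : LB G k := by
  classical
  intro n bag hd
  obtain ⟨i, hi⟩ := hH n _ (trace_decomp f hinj hadj hd)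
  exact ⟨i, hi.trans (card_preimage_le f hinj _)⟩

/-! ### Basic facts about the complete binary tree -/

abbrev BTV (h : ℕ) : Type := {l : List Bool // l.length ≤ h}

lemma cbt_adj {h : ℕ} {a b : BTV h} : (completeBinaryTree h).Adj a b ↔
    a ≠ b ∧ ((∃ x, b.1 = x :: a.1) ∨ ∃ x, a.1 = x :: b.1) := by rfl

def cbtRoot (h : ℕ) : BTV h := ⟨[], by simp⟩

def cbtPar {h : ℕ} (v : BTV h) : BTV h := ⟨v.1.tail, by
  have := v.2; rw [List.length_tail]; omega⟩

lemma cbt_adj_par {h : ℕ} (v : BTV h) (hv : v.1 ≠ []) :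
    (completeBinaryTree h).Adj v (cbtPar v) := by
  rw [cbt_adj]
  constructor
  · intro he
    have : v.1 = v.1.tail := congrArg Subtype.val he
    have := congrArg List.length this
    rw [List.length_tail] at this
    have : v.1.length ≠ 0 := fun h0 => hv (List.length_eq_zero_iff.mp h0)
    omega
  · exact Or.inr ⟨v.1.head hv, (List.cons_head_tail hv).symm⟩

lemma cbt_reachable_root {h : ℕ} : ∀ (l : List Bool) (hl : l.length ≤ h),
    (completeBinaryTree h).Reachable ⟨l, hl⟩ (cbtRoot h) := by
  intro l
  induction l with
  | nil => intro hl; exact Reachable.refl _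
  | cons x t ih =>
    intro hl
    have ht : t.length ≤ h := by simp at hl; omega
    have hadj : (completeBinaryTree h).Adj ⟨x :: t, hl⟩ ⟨t, ht⟩ := by
      rw [cbt_adj]
      refine ⟨?_, Or.inr ⟨x, rfl⟩⟩
      intro he
      have := congrArg (List.length ∘ Subtype.val) he
      simp at this
    exact hadj.reachable.trans (ih ht)

lemma cbt_connected (h : ℕ) : (completeBinaryTree h).Connected := by
  have : Nonempty (BTV h) := ⟨cbtRoot h⟩
  refine ⟨fun u v => ?_⟩
  exact (cbt_reachable_root u.1 u.2).trans (cbt_reachable_root v.1 v.2).symm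

lemma cbt_rank {h : ℕ} (u v : BTV h) (huv : (completeBinaryTree h).Adj u v) :
    u.1.length = v.1.length + 1 ∨ v.1.length = u.1.length + 1 := by
  rw [cbt_adj] at huv
  rcases huv.2 with ⟨x, hx⟩ | ⟨x, hx⟩
  · right; rw [hx]; simp
  · left; rw [hx]; simp

lemma cbt_par_unique {h : ℕ} (u v : BTV h) (huv : (completeBinaryTree h).Adj u v)
    (hlen : v.1.length + 1 = u.1.length) : v = cbtPar u := by
  rw [cbt_adj] at huv
  rcases huv.2 with ⟨x, hx⟩ | ⟨x, hx⟩
  · exfalso; have := congrArg List.length hx; simp at this; omega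
  · apply Subtype.ext
    show v.1 = u.1.tail
    rw [hx]; rfl

lemma cbt_isTree (h : ℕ) : (completeBinaryTree h).IsTree :=
  ⟨cbt_connected h, acyclic_of_parent (fun v => v.1.length) cbtPar cbt_rank cbt_par_unique⟩

noncomputable instance (h : ℕ) : Fintype (BTV h) :=
  (List.finite_length_le Bool h).fintype

/-! ### Subtree copies inside larger binary trees -/

/-- The set of vertices of the binary tree at or below a given position, described by a
suffix `p`. -/
def SuffSet (H : ℕ) (p : List Bool) : Set (BTV H) := {l | ∃ s : List Bool, l.1 = s ++ p}

lemma suffSet_disjoint {H : ℕ} {p q : List Bool} (hlen : p.length = q.length) (hpq : p ≠ q)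
    {l : BTV H} (hp : l ∈ SuffSet H p) (hq : l ∈ SuffSet H q) : False := by
  obtain ⟨s, hs⟩ := hp
  obtain ⟨t, ht⟩ := hq
  have heq : s ++ p = t ++ q := hs ▸ ht
  have hst : s.length = t.length := by
    have := congrArg List.length heq; simp at this; omega
  exact hpq (List.append_inj heq hst).2

lemma suffSet_compl_closed {H : ℕ} {p : List Bool} {x : Bool} {t : List Bool}
    (hl : (x :: t).length ≤ H) (ht : t.length ≤ H)
    (hmem : (⟨x :: t, hl⟩ : BTV H) ∉ SuffSet H p) : (⟨t, ht⟩ : BTV H) ∉ SuffSet H p := by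
  rintro ⟨s, hs⟩
  exact hmem ⟨x :: s, by simp at hs ⊢; rw [hs]⟩

lemma suffSet_compl_connected {H : ℕ} {p : List Bool} (hp : p ≠ []) :
    ((completeBinaryTree H).induce (SuffSet H p)ᶜ).Connected := by
  have hroot : cbtRoot H ∈ (SuffSet H p)ᶜ := by
    rintro ⟨s, hs⟩
    simp [cbtRoot] at hs
    exact hp hs.2
  have : Nonempty ↥(SuffSet H p)ᶜ := ⟨⟨cbtRoot H, hroot⟩⟩
  refine ⟨fun u v => ?_⟩
  suffices hreach : ∀ (l : List Bool) (hl : l.length ≤ H)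
      (hm : (⟨l, hl⟩ : BTV H) ∈ (SuffSet H p)ᶜ),
      ((completeBinaryTree H).induce (SuffSet H p)ᶜ).Reachable ⟨⟨l, hl⟩, hm⟩
        ⟨cbtRoot H, hroot⟩ by
    have h1 := hreach u.1.1 u.1.2 (by simpa using u.2)
    have h2 := hreach v.1.1 v.1.2 (by simpa using v.2)
    exact h1.trans h2.symm
  intro l
  induction l with
  | nil =>
    intro hl hm
    have : (⟨⟨[], hl⟩, hm⟩ : ↥(SuffSet H p)ᶜ) = ⟨cbtRoot H, hroot⟩ := by
      apply Subtype.ext; apply Subtype.ext; rfl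
    rw [this]
  | cons x t ih =>
    intro hl hm
    have ht : t.length ≤ H := by simp at hl; omega
    have htm : (⟨t, ht⟩ : BTV H) ∉ SuffSet H p := suffSet_compl_closed hl ht hm
    have hadj : ((completeBinaryTree H).induce (SuffSet H p)ᶜ).Adj ⟨⟨x :: t, hl⟩, hm⟩
        ⟨⟨t, ht⟩, htm⟩ := by
      show (completeBinaryTree H).Adj _ _
      rw [cbt_adj]
      refine ⟨?_, Or.inr ⟨x, rfl⟩⟩
      intro he
      have := congrArg (List.length ∘ Subtype.val) he
      simp at this
    exact hadj.reachable.trans (ih ht htm)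

/-- The copy of `T_h` inside `T_{h+2}` sitting at or above the suffix `p` (of length 2). -/
def copyMap {h : ℕ} (p : List Bool) (hp : p.length = 2) (l : BTV h) : BTV (h + 2) :=
  ⟨l.1 ++ p, by have := l.2; simp [hp]; omega⟩

lemma copyMap_injective {h : ℕ} (p : List Bool) (hp : p.length = 2) :
    Function.Injective (copyMap (h := h) p hp) := by
  intro a b hab
  apply Subtype.ext
  have : a.1 ++ p = b.1 ++ p := congrArg Subtype.val hab
  exact List.append_left_injective p this

lemma copyMap_adj {h : ℕ} (p : List Bool) (hp : p.length = 2) (a b : BTV h)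
    (hab : (completeBinaryTree h).Adj a b) :
    (completeBinaryTree (h + 2)).Adj (copyMap p hp a) (copyMap p hp b) := by
  rw [cbt_adj] at hab ⊢
  refine ⟨fun he => hab.1 (copyMap_injective p hp he), ?_⟩
  rcases hab.2 with ⟨x, hx⟩ | ⟨x, hx⟩
  · exact Or.inl ⟨x, by simp [copyMap, hx]⟩
  · exact Or.inr ⟨x, by simp [copyMap, hx]⟩

lemma copyMap_mem {h : ℕ} (p : List Bool) (hp : p.length = 2) (a : BTV h) :
    copyMap p hp a ∈ SuffSet (h + 2) p := ⟨a.1, rfl⟩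

/-! ### The pathwidth lower bound induction -/

lemma core_step {H : ℕ} {n : ℕ} {bag : Fin n → Finset (BTV H)}
    (hd : IsTreeDecomp (completeBinaryTree H) (pathGraph n) bag)
    {p : List Bool} (hp : p ≠ [])
    {ja jm jb : Fin n} (h1 : ja ≤ jm) (h2 : jm ≤ jb)
    {u u' : BTV H} (hu : u ∈ bag ja) (hu' : u' ∈ bag jb)
    (hus : u ∉ SuffSet H p) (hu's : u' ∉ SuffSet H p)
    {k : ℕ} {A : Finset (BTV H)} (hA : A ⊆ bag jm) (hAS : ∀ a ∈ A, a ∈ SuffSet H p)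
    (hcard : k + 1 ≤ A.card) :
    ∃ i, k + 2 ≤ (bag i).card := by
  classical
  obtain ⟨w, hwC, hwbag⟩ :=
    decomp_interval hd (suffSet_compl_connected hp) hus hu's hu hu' h1 h2
  refine ⟨jm, ?_⟩
  have hw : w ∉ A := fun hwA => hwC (hAS w hwA)
  calc k + 2 ≤ (insert w A).card := by rw [Finset.card_insert_of_notMem hw]; omega
    _ ≤ (bag jm).card := Finset.card_le_card (Finset.insert_subset hwbag hA)

lemma LB_step {h k : ℕ} (hLB : LB (completeBinaryTree h) k) :
    LB (completeBinaryTree (h + 2)) (k + 1) := by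
  classical
  intro n bag hd
  have get : ∀ (p : List Bool) (hp : p.length = 2),
      ∃ (j : Fin n) (A : Finset (BTV (h + 2))), A ⊆ bag j ∧
        (∀ a ∈ A, a ∈ SuffSet (h + 2) p) ∧ k + 1 ≤ A.card := by
    intro p hp
    obtain ⟨j, hj⟩ := hLB n _ (trace_decomp (copyMap p hp) (copyMap_injective p hp)
      (fun a b => copyMap_adj p hp a b) hd)
    refine ⟨j, ((bag j).preimage _ (copyMap_injective p hp).injOn).image (copyMap p hp),
      ?_, ?_, ?_⟩
    · intro x hx
      obtain ⟨y, hy, rfl⟩ := Finset.mem_image.mp hx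
      exact Finset.mem_preimage.mp hy
    · intro x hx
      obtain ⟨y, hy, rfl⟩ := Finset.mem_image.mp hx
      exact copyMap_mem p hp y
    · rw [Finset.card_image_of_injective _ (copyMap_injective p hp)]
      exact hj
  obtain ⟨j1, A1, hA1b, hA1s, hA1c⟩ := get [false, false] rfl
  obtain ⟨j2, A2, hA2b, hA2s, hA2c⟩ := get [true, false] rfl
  obtain ⟨j3, A3, hA3b, hA3s, hA3c⟩ := get [false, true] rfl
  obtain ⟨u1, hu1⟩ := Finset.card_pos.mp (by omega : 0 < A1.card)
  obtain ⟨u2, hu2⟩ := Finset.card_pos.mp (by omega : 0 < A2.card)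
  obtain ⟨u3, hu3⟩ := Finset.card_pos.mp (by omega : 0 < A3.card)
  have hu1b := hA1b hu1
  have hu2b := hA2b hu2
  have hu3b := hA3b hu3
  have hu1s := hA1s u1 hu1
  have hu2s := hA2s u2 hu2
  have hu3s := hA3s u3 hu3
  -- non-memberships
  have h12 : u1 ∉ SuffSet (h + 2) [true, false] :=
    fun hm => suffSet_disjoint (p := [false, false]) (q := [true, false]) rfl
      (by decide) hu1s hm
  have h13 : u1 ∉ SuffSet (h + 2) [false, true] :=
    fun hm => suffSet_disjoint (p := [false, false]) (q := [false, true]) rfl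
      (by decide) hu1s hm
  have h21 : u2 ∉ SuffSet (h + 2) [false, false] :=
    fun hm => suffSet_disjoint (p := [true, false]) (q := [false, false]) rfl
      (by decide) hu2s hm
  have h23 : u2 ∉ SuffSet (h + 2) [false, true] :=
    fun hm => suffSet_disjoint (p := [true, false]) (q := [false, true]) rfl
      (by decide) hu2s hm
  have h31 : u3 ∉ SuffSet (h + 2) [false, false] :=
    fun hm => suffSet_disjoint (p := [false, true]) (q := [false, false]) rfl
      (by decide) hu3s hm
  have h32 : u3 ∉ SuffSet (h + 2) [true, false] :=
    fun hm => suffSet_disjoint (p := [false, true]) (q := [true, false]) rfl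
      (by decide) hu3s hm
  rcases le_total j1 j2 with o12 | o21 <;> rcases le_total j2 j3 with o23 | o32 <;>
    rcases le_total j1 j3 with o13 | o31
  · exact core_step hd (by decide) o12 o23 hu1b hu3b h12 h32 hA2b hA2s hA2c
  · exact core_step hd (by decide) o12 o23 hu1b hu3b h12 h32 hA2b hA2s hA2c
  · exact core_step hd (by decide) o13 o32 hu1b hu2b h13 h23 hA3b hA3s hA3c
  · exact core_step hd (by decide) o31 o12 hu3b hu2b h31 h21 hA1b hA1s hA1c
  · exact core_step hd (by decide) o21 o13 hu2b hu3b h21 h31 hA1b hA1s hA1c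
  · exact core_step hd (by decide) o23 o31 hu2b hu1b h23 h13 hA3b hA3s hA3c
  · exact core_step hd (by decide) o32 o21 hu3b hu1b h32 h12 hA2b hA2s hA2c
  · exact core_step hd (by decide) o32 o21 hu3b hu1b h32 h12 hA2b hA2s hA2c

lemma LB_even : ∀ k : ℕ, LB (completeBinaryTree (2 * k)) k
  | 0 => LB_zero _ ⟨cbtRoot 0⟩
  | (k + 1) => by
      have hs := LB_step (LB_even k)
      have heq : 2 * k + 2 = 2 * (k + 1) := by ring
      exact heq ▸ hs

lemma LB_mono_h {h k : ℕ} (hLB : LB (completeBinaryTree h) k) :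
    LB (completeBinaryTree (h + 1)) k := by
  apply LB_of_map (fun l : BTV h => (⟨l.1, l.2.trans (Nat.le_succ h)⟩ : BTV (h + 1)))
  · intro a b hab
    have : a.1 = b.1 := congrArg (fun x : BTV (h + 1) => x.1) hab
    exact Subtype.ext this
  · intro a b hab
    rw [cbt_adj] at hab ⊢
    refine ⟨fun he => hab.1 ?_, hab.2⟩
    have : a.1 = b.1 := congrArg (fun x : BTV (h + 1) => x.1) he
    exact Subtype.ext this
  · exact hLB

lemma LB_all {k h : ℕ} (hkh : 2 * k ≤ h) : LB (completeBinaryTree h) k := by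
  obtain ⟨d, rfl⟩ : ∃ d, h = 2 * k + d := ⟨h - 2 * k, by omega⟩
  clear hkh
  induction d with
  | zero => exact LB_even k
  | succ d ih => exact LB_mono_h ih

/-! ### From `LB` to pathwidth -/

lemma pw_set_nonempty {V : Type} [Fintype V] (hne : Nonempty V) (G : SimpleGraph V) :
    (Fintype.card V - 1) ∈ {w : ℕ | ∃ (n : ℕ) (bag : Fin n → Finset V),
      IsTreeDecomp G (pathGraph n) bag ∧ ∀ i, (bag i).card ≤ w + 1} := by
  classical
  refine ⟨1, fun _ => Finset.univ, ⟨⟨pathGraph_connected 0, ?_⟩, ?_, ?_, ?_⟩, ?_⟩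
  · exact acyclic_of_parent (fun i => (i : ℕ)) id
      (fun u v huv => by rcases pathGraph_adj.mp huv with h | h <;> omega)
      (fun u v huv _ => Subsingleton.elim _ _)
  · exact fun v => ⟨0, Finset.mem_univ v⟩
  · exact fun u v _ => ⟨0, Finset.mem_univ u, Finset.mem_univ v⟩
  · intro v
    have : Nonempty ↥{i : Fin 1 | v ∈ (Finset.univ : Finset V)} := ⟨⟨0, Finset.mem_univ v⟩⟩
    exact ⟨fun a b => by rw [Subsingleton.elim a b]⟩
  · intro i
    have : 1 ≤ Fintype.card V := Fintype.card_pos_iff.mpr hne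
    simp [Finset.card_univ]
    omega

lemma LB_le_pathwidth {V : Type} [Fintype V] (hne : Nonempty V) {G : SimpleGraph V} {k : ℕ}
    (hLB : LB G k) : k ≤ pathwidth G := by
  have hne' : {w : ℕ | ∃ (n : ℕ) (bag : Fin n → Finset V),
      IsTreeDecomp G (pathGraph n) bag ∧ ∀ i, (bag i).card ≤ w + 1}.Nonempty :=
    ⟨_, pw_set_nonempty hne G⟩
  have hmem := Nat.sInf_mem hne'
  obtain ⟨n, bag, hd, hb⟩ := hmem
  obtain ⟨i, hi⟩ := hLB n bag hd
  have h2 : (bag i).card ≤ pathwidth G + 1 := hb i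
  exact Nat.le_of_succ_le_succ (hi.trans h2)

/-! ### The treewidth upper bound -/

lemma treewidth_cbt_le (h : ℕ) : treewidth (completeBinaryTree h) ≤ 1 := by
  classical
  obtain ⟨n, ⟨e⟩⟩ : ∃ n : ℕ, Nonempty (BTV h ≃ Fin n) :=
    ⟨Fintype.card (BTV h), ⟨Fintype.equivFin _⟩⟩
  set T : SimpleGraph (Fin n) := (completeBinaryTree h).comap ⇑e.symm with hT
  set bag : Fin n → Finset (BTV h) := fun i => {e.symm i, cbtPar (e.symm i)} with hbag
  have hmem : ∀ (v : BTV h) (i : Fin n),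
      v ∈ bag i ↔ v = e.symm i ∨ v = cbtPar (e.symm i) := by
    intro v i; simp [hbag]
  have htree : T.IsTree := by
    constructor
    · have hne : Nonempty (Fin n) := ⟨e (cbtRoot h)⟩
      refine ⟨fun i j => ?_⟩
      have hr := (cbt_connected h).preconnected (e.symm i) (e.symm j)
      let φ : completeBinaryTree h →g T := ⟨e, fun {a b} hab => by
        show (completeBinaryTree h).Adj (e.symm (e a)) (e.symm (e b))
        simpa using hab⟩
      have h2 : T.Reachable (e (e.symm i)) (e (e.symm j)) := hr.map φ
      simpa using h2
    · apply acyclic_of_parent (fun i => (e.symm i).1.length) (fun i => e (cbtPar (e.symm i)))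
      · intro u v huv
        exact cbt_rank _ _ huv
      · intro u v huv hlen
        have h1 : e.symm v = cbtPar (e.symm u) :=
          cbt_par_unique (e.symm u) (e.symm v) huv hlen
        show v = e (cbtPar (e.symm u))
        rw [← h1, Equiv.apply_symm_apply]
  apply Nat.sInf_le
  refine ⟨n, T, bag, ⟨htree, ?_, ?_, ?_⟩, ?_⟩
  · intro v
    exact ⟨e v, by rw [hmem]; left; rw [Equiv.symm_apply_apply]⟩
  · intro u v huv
    rw [cbt_adj] at huv
    rcases huv.2 with ⟨x, hx⟩ | ⟨x, hx⟩
    · refine ⟨e v, ?_, ?_⟩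
      · rw [hmem]; right
        apply Subtype.ext
        show u.1 = (e.symm (e v)).1.tail
        rw [Equiv.symm_apply_apply, hx]
        rfl
      · rw [hmem]; left; rw [Equiv.symm_apply_apply]
    · refine ⟨e u, ?_, ?_⟩
      · rw [hmem]; left; rw [Equiv.symm_apply_apply]
      · rw [hmem]; right
        apply Subtype.ext
        show v.1 = (e.symm (e u)).1.tail
        rw [Equiv.symm_apply_apply, hx]
        rfl
  · intro v
    have hcA : v ∈ bag (e v) := by rw [hmem]; left; rw [Equiv.symm_apply_apply]
    have hreach : ∀ a : ↥{i | v ∈ bag i},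
        (T.induce {i | v ∈ bag i}).Reachable a ⟨e v, hcA⟩ := by
      rintro ⟨i, hi⟩
      have hi' := (hmem v i).mp hi
      by_cases hie : i = e v
      · have : (⟨i, hi⟩ : ↥{i | v ∈ bag i}) = ⟨e v, hcA⟩ := Subtype.ext hie
        rw [this]
      · have hv : v = cbtPar (e.symm i) := by
          rcases hi' with hv | hv
          · exfalso; apply hie; rw [hv, Equiv.apply_symm_apply]
          · exact hv
        have hne2 : (e.symm i).1 ≠ [] := by
          intro hnil
          apply hie
          have hpar : cbtPar (e.symm i) = e.symm i := Subtype.ext (by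
            show (e.symm i).1.tail = (e.symm i).1
            rw [hnil]
            rfl)
          rw [hv, hpar, Equiv.apply_symm_apply]
        have hadj : T.Adj i (e v) := by
          show (completeBinaryTree h).Adj (e.symm i) (e.symm (e v))
          rw [Equiv.symm_apply_apply, hv]
          exact cbt_adj_par (e.symm i) hne2
        exact SimpleGraph.Adj.reachable
          (by exact hadj : (T.induce {i | v ∈ bag i}).Adj ⟨i, hi⟩ ⟨e v, hcA⟩)
    have : Nonempty ↥{i | v ∈ bag i} := ⟨⟨e v, hcA⟩⟩
    exact ⟨fun a b => (hreach a).trans (hreach b).symm⟩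
  · intro i
    exact (Finset.card_insert_le _ _).trans (by simp)

/-! ### Main theorem -/

/-- There is a sequence of finite simple graphs of uniformly bounded treewidth but unbounded
pathwidth: the complete binary trees `T_h` satisfy `tw(T_h) ≤ 1` for all `h`, while
`pw(T_h) → ∞` as `h → ∞`. In particular, for every `c` there is a finite tree `T` with
`tw(T) ≤ 1` and `pw(T) > c`. -/
theorem bounded_treewidth_unbounded_pathwidth :
    (∀ h : ℕ, treewidth (completeBinaryTree h) ≤ 1) ∧
    Filter.Tendsto (fun h : ℕ => pathwidth (completeBinaryTree h)) Filter.atTop Filter.atTop ∧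
    (∀ c : ℕ, ∃ (V : Type) (_ : Fintype V) (T : SimpleGraph V),
      T.IsTree ∧ treewidth T ≤ 1 ∧ c < pathwidth T) := by
  refine ⟨treewidth_cbt_le, ?_, ?_⟩
  · rw [Filter.tendsto_atTop]
    intro b
    filter_upwards [Filter.eventually_ge_atTop (2 * b)] with h hh
    exact LB_le_pathwidth ⟨cbtRoot h⟩ (LB_all hh)
  · intro c
    refine ⟨BTV (2 * (c + 1)), inferInstance, completeBinaryTree (2 * (c + 1)),
      cbt_isTree _, treewidth_cbt_le _, ?_⟩
    have := LB_le_pathwidth (⟨cbtRoot (2 * (c + 1))⟩ : Nonempty (BTV (2 * (c + 1))))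
      (LB_all (le_refl (2 * (c + 1))))
    omega
end

section
/- Let G = (V, E) be a finite simple graph, let m ≥ 1, and for each vertex v ∈ V let H_v be a finite simple graph on at most m vertices, with the vertex sets of the H_v pairwise disjoint. Let G' be any graph whose vertex set is the disjoint union of the vertex sets of the H_v, whose edge set contains all edges of each H_v, and whose remaining edges are as follows: for each edge {u, v} ∈ E there is exactly one edge of G' joining some vertex of H_u to some vertex of H_v (and there are no other edges). Then tw(G') + 1 ≤ m · (tw(G) + 1); in particular tw(G') ≤ m · (tw(G) + 1) − 1. -/
/-- Replace every vertex `v` of a finite simple graph `G` by a finite simple graph `H v` on at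
most `m ≥ 1` vertices (with pairwise disjoint vertex sets), keeping all edges of each `H v`,
and, for each edge `{u, v}` of `G`, adding exactly one edge between some vertex of `H u` and
some vertex of `H v` (and no other edges). Then `tw(G') + 1 ≤ m * (tw(G) + 1)`; in particular
`tw(G') ≤ m * (tw(G) + 1) - 1`. -/
theorem treewidth_blowup {V : Type} [Fintype V] (G : SimpleGraph V) (m : ℕ) (hm : 1 ≤ m)
    {W : V → Type} [∀ v, Fintype (W v)] (hW : ∀ v, Fintype.card (W v) ≤ m)
    (H : ∀ v, SimpleGraph (W v)) (G' : SimpleGraph (Σ v : V, W v))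
    (hintra : ∀ (v : V) (x y : W v),
      G'.Adj ⟨v, x⟩ ⟨v, y⟩ ↔ (H v).Adj x y)
    (hcross : ∀ u v : V, u ≠ v → G.Adj u v →
      ∃! p : W u × W v, G'.Adj ⟨u, p.1⟩ ⟨v, p.2⟩)
    (hnone : ∀ u v : V, u ≠ v → ¬ G.Adj u v →
      ∀ (x : W u) (y : W v), ¬ G'.Adj ⟨u, x⟩ ⟨v, y⟩) :
    treewidth G' + 1 ≤ m * (treewidth G + 1) ∧
    treewidth G' ≤ m * (treewidth G + 1) - 1 := by
  classical
  -- the defining set for treewidth G is nonempty (trivial one-bag decomposition)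
  have hne : {w : ℕ | ∃ (n : ℕ) (T : SimpleGraph (Fin n)) (bag : Fin n → Finset V),
      IsTreeDecomp G T bag ∧ ∀ i, (bag i).card ≤ w + 1}.Nonempty := by
    refine ⟨Fintype.card V, 1, ⊥, fun _ => Finset.univ, ⟨?_, ?_, ?_, ?_⟩, ?_⟩
    · refine ⟨?_, SimpleGraph.isAcyclic_bot⟩
      rw [SimpleGraph.connected_iff]
      exact ⟨fun a b => Subsingleton.elim a b ▸ SimpleGraph.Reachable.refl a, ⟨0⟩⟩
    · exact fun v => ⟨0, Finset.mem_univ v⟩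
    · exact fun u v _ => ⟨0, Finset.mem_univ u, Finset.mem_univ v⟩
    · intro v
      rw [SimpleGraph.connected_iff]
      exact ⟨fun a b => Subsingleton.elim a b ▸ SimpleGraph.Reachable.refl a,
        ⟨⟨0, Finset.mem_univ v⟩⟩⟩
    · intro i; simp
  -- extract an optimal tree decomposition of G
  have hmem := Nat.sInf_mem hne
  obtain ⟨n, T, bag, ⟨hTree, hcov, hedge, hconn⟩, hcard⟩ := hmem
  set w := treewidth G with hw
  -- blow up the bags
  set bag' : Fin n → Finset (Σ v : V, W v) :=
    fun i => (bag i).sigma (fun v => (Finset.univ : Finset (W v))) with hbag'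
  have hmem' : ∀ (i : Fin n) (a : Σ v : V, W v), a ∈ bag' i ↔ a.1 ∈ bag i := by
    intro i a; simp [hbag', Finset.mem_sigma]
  have hdecomp : IsTreeDecomp G' T bag' := by
    refine ⟨hTree, ?_, ?_, ?_⟩
    · intro a
      obtain ⟨i, hi⟩ := hcov a.1
      exact ⟨i, (hmem' i a).2 hi⟩
    · rintro ⟨u, x⟩ ⟨v, y⟩ hadj
      by_cases huv : u = v
      · subst huv
        obtain ⟨i, hi⟩ := hcov u
        exact ⟨i, (hmem' i ⟨u, x⟩).2 hi, (hmem' i ⟨u, y⟩).2 hi⟩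
      · have hG : G.Adj u v := by
          by_contra hnot
          exact hnone u v huv hnot x y hadj
        obtain ⟨i, hiu, hiv⟩ := hedge u v hG
        exact ⟨i, (hmem' i ⟨u, x⟩).2 hiu, (hmem' i ⟨v, y⟩).2 hiv⟩
    · intro a
      have hset : {i | a ∈ bag' i} = {i | a.1 ∈ bag i} := by
        ext i; exact hmem' i a
      rw [hset]
      exact hconn a.1
  have hcard' : ∀ i, (bag' i).card ≤ m * (w + 1) := by
    intro i
    have h1 : (bag' i).card = ∑ v ∈ bag i, Fintype.card (W v) := by
      simp [hbag', Finset.card_sigma]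
    have h2 : ∑ v ∈ bag i, Fintype.card (W v) ≤ ∑ _v ∈ bag i, m :=
      Finset.sum_le_sum (fun v _ => hW v)
    have h3 : ∑ _v ∈ bag i, m = (bag i).card * m := by
      simp [Finset.sum_const, mul_comm]
    calc (bag' i).card = ∑ v ∈ bag i, Fintype.card (W v) := h1
      _ ≤ (bag i).card * m := by rw [← h3]; exact h2
      _ ≤ (w + 1) * m := Nat.mul_le_mul_right m (hcard i)
      _ = m * (w + 1) := mul_comm _ _
  have hm1 : 1 ≤ m * (w + 1) := le_trans hm (Nat.le_mul_of_pos_right m (Nat.succ_pos w))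
  have hle : treewidth G' ≤ m * (w + 1) - 1 := by
    apply Nat.sInf_le
    refine ⟨n, T, bag', hdecomp, ?_⟩
    intro i
    have := hcard' i
    omega
  exact ⟨by omega, hle⟩
end
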